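/- Let f, g : [a,b] → ℝ be continuous on [a,b] and differentiable on (a,b), with g' nonvanishing on (a,b). If f'/g' is increasing on (a,b), then the functions x ↦ (f(x)−f(a))/(g(x)−g(a)) and x ↦ (f(x)−f(b))/(g(x)−g(b)) are increasing on (a,b). -/
import Mathlib


open Set

/-- Slope lemma via Cauchy MVT: on a subinterval `[u,v]` the slope of `f` equals
`f'/g'` at some interior point times the slope of `g`. -/
private lemma mlr_slope (a b : ℝ) (f g f' g' : ℝ → ℝ)
    (hf : ContinuousOn f (Icc a b)) (hg : ContinuousOn g (Icc a b))
    (hf' : ∀ x ∈ Ioo a b, HasDerivAt f (f' x) x)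
    (hg' : ∀ x ∈ Ioo a b, HasDerivAt g (g' x) x)
    (hg'ne : ∀ x ∈ Ioo a b, g' x ≠ 0)
    (u v : ℝ) (huv : u < v) (hau : a ≤ u) (hvb : v ≤ b) :
    ∃ c ∈ Ioo u v, f v - f u = (f' c / g' c) * (g v - g u) := by
  have hsub : Icc u v ⊆ Icc a b := Icc_subset_Icc hau hvb
  have hsub' : Ioo u v ⊆ Ioo a b := Ioo_subset_Ioo hau hvb
  obtain ⟨c, hc, hceq⟩ := exists_ratio_hasDerivAt_eq_ratio_slope f f' huv (hf.mono hsub)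
    (fun x hx => hf' x (hsub' hx)) g g' (hg.mono hsub) (fun x hx => hg' x (hsub' hx))
  refine ⟨c, hc, ?_⟩
  have hne := hg'ne c (hsub' hc)
  field_simp
  linarith [hceq]

/-- The main lemma under the extra hypothesis that `g'` is positive. -/
private lemma mlr_aux (a b : ℝ) (hab : a < b) (f g f' g' : ℝ → ℝ)
    (hf : ContinuousOn f (Icc a b)) (hg : ContinuousOn g (Icc a b))
    (hf' : ∀ x ∈ Ioo a b, HasDerivAt f (f' x) x)
    (hg' : ∀ x ∈ Ioo a b, HasDerivAt g (g' x) x)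
    (hg'pos : ∀ x ∈ Ioo a b, 0 < g' x)
    (hmono : MonotoneOn (fun x => f' x / g' x) (Ioo a b)) :
    MonotoneOn (fun x => (f x - f a) / (g x - g a)) (Ioo a b) ∧
    MonotoneOn (fun x => (f x - f b) / (g x - g b)) (Ioo a b) := by
  have hg'ne : ∀ x ∈ Ioo a b, g' x ≠ 0 := fun x hx => (hg'pos x hx).ne'
  -- g is strictly monotone on [a,b]
  have hgmono : StrictMonoOn g (Icc a b) := by
    apply strictMonoOn_of_hasDerivWithinAt_pos (convex_Icc a b) hg
    · rw [interior_Icc]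
      exact fun x hx => (hg' x hx).hasDerivWithinAt
    · rw [interior_Icc]; exact hg'pos
  have slope := mlr_slope a b f g f' g' hf hg hf' hg' hg'ne
  constructor
  · intro x hx y hy hxy
    rcases eq_or_lt_of_le hxy with rfl | hxy
    · exact le_refl _
    simp only
    obtain ⟨c1, hc1, he1⟩ := slope a x hx.1 le_rfl hx.2.le
    obtain ⟨c2, hc2, he2⟩ := slope x y hxy hx.1.le hy.2.le
    have hc1m : c1 ∈ Ioo a b := ⟨hc1.1, hc1.2.trans hx.2⟩
    have hc2m : c2 ∈ Ioo a b := ⟨hx.1.trans hc2.1, hc2.2.trans hy.2⟩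
    have hr : f' c1 / g' c1 ≤ f' c2 / g' c2 :=
      hmono hc1m hc2m (hc1.2.trans hc2.1).le
    have h1 : 0 < g x - g a := sub_pos.2 <|
      hgmono (left_mem_Icc.2 hab.le) ⟨hx.1.le, hx.2.le⟩ hx.1
    have h2 : 0 < g y - g a := sub_pos.2 <|
      hgmono (left_mem_Icc.2 hab.le) ⟨hy.1.le, hy.2.le⟩ hy.1
    have h3 : 0 < g y - g x := sub_pos.2 <|
      hgmono ⟨hx.1.le, hx.2.le⟩ ⟨hy.1.le, hy.2.le⟩ hxy
    rw [div_le_div_iff₀ h1 h2]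
    nlinarith [mul_nonneg (sub_nonneg.2 hr) (mul_pos h3 h1).le]
  · intro x hx y hy hxy
    rcases eq_or_lt_of_le hxy with rfl | hxy
    · exact le_refl _
    simp only
    obtain ⟨c2, hc2, he2⟩ := slope x y hxy hx.1.le hy.2.le
    obtain ⟨c3, hc3, he3⟩ := slope y b hy.2 hy.1.le le_rfl
    have hc2m : c2 ∈ Ioo a b := ⟨hx.1.trans hc2.1, hc2.2.trans hy.2⟩
    have hc3m : c3 ∈ Ioo a b := ⟨hy.1.trans hc3.1, hc3.2⟩
    have hr : f' c2 / g' c2 ≤ f' c3 / g' c3 :=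
      hmono hc2m hc3m (hc2.2.trans hc3.1).le
    have h1 : 0 < g b - g x := sub_pos.2 <|
      hgmono ⟨hx.1.le, hx.2.le⟩ (right_mem_Icc.2 hab.le) hx.2
    have h2 : 0 < g b - g y := sub_pos.2 <|
      hgmono ⟨hy.1.le, hy.2.le⟩ (right_mem_Icc.2 hab.le) hy.2
    have h3 : 0 < g y - g x := sub_pos.2 <|
      hgmono ⟨hx.1.le, hx.2.le⟩ ⟨hy.1.le, hy.2.le⟩ hxy
    rw [show f x - f b = -(f b - f x) by ring, show g x - g b = -(g b - g x) by ring,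
      show f y - f b = -(f b - f y) by ring, show g y - g b = -(g b - g y) by ring,
      neg_div_neg_eq, neg_div_neg_eq, div_le_div_iff₀ h1 h2]
    nlinarith [mul_nonneg (sub_nonneg.2 hr) (mul_pos h3 h2).le]

theorem monotone_lhopital_rule (a b : ℝ) (hab : a < b) (f g f' g' : ℝ → ℝ)
    (hf : ContinuousOn f (Icc a b)) (hg : ContinuousOn g (Icc a b))
    (hf' : ∀ x ∈ Ioo a b, HasDerivAt f (f' x) x)
    (hg' : ∀ x ∈ Ioo a b, HasDerivAt g (g' x) x)
    (hg'ne : ∀ x ∈ Ioo a b, g' x ≠ 0)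
    (hmono : MonotoneOn (fun x => f' x / g' x) (Ioo a b)) :
    MonotoneOn (fun x => (f x - f a) / (g x - g a)) (Ioo a b) ∧
    MonotoneOn (fun x => (f x - f b) / (g x - g b)) (Ioo a b) := by
  -- g' has constant sign on (a, b), by Darboux
  have hsign : (∀ x ∈ Ioo a b, 0 < g' x) ∨ (∀ x ∈ Ioo a b, g' x < 0) := by
    by_contra h
    push_neg at h
    obtain ⟨⟨u, hu, hu0⟩, ⟨v, hv, hv0⟩⟩ := h
    have hupos : g' u < 0 := lt_of_le_of_ne hu0 (hg'ne u hu)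
    have hvpos : 0 < g' v := lt_of_le_of_ne hv0 (Ne.symm (hg'ne v hv))
    -- Darboux between u and v
    rcases lt_trichotomy u v with huv | rfl | hvu
    · have hsub : Icc u v ⊆ Ioo a b := Icc_subset_Ioo hu.1 hv.2
      obtain ⟨c, hc, hc0⟩ := exists_hasDerivWithinAt_eq_of_gt_of_lt huv.le
        (fun x hx => (hg' x (hsub hx)).hasDerivWithinAt) (m := 0) hupos hvpos
      exact hg'ne c (hsub (Ioo_subset_Icc_self hc)) hc0
    · exact absurd hvpos (asymm hupos)
    · have hsub : Icc v u ⊆ Ioo a b := Icc_subset_Ioo hv.1 hu.2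
      obtain ⟨c, hc, hc0⟩ := exists_hasDerivWithinAt_eq_of_lt_of_gt hvu.le
        (fun x hx => (hg' x (hsub hx)).hasDerivWithinAt) (m := 0) hvpos hupos
      exact hg'ne c (hsub (Ioo_subset_Icc_self hc)) hc0
  rcases hsign with hpos | hneg
  · exact mlr_aux a b hab f g f' g' hf hg hf' hg' hpos hmono
  · have := mlr_aux a b hab (fun x => -f x) (fun x => -g x) (fun x => -f' x) (fun x => -g' x)
      hf.neg hg.neg (fun x hx => (hf' x hx).neg) (fun x hx => (hg' x hx).neg)
      (fun x hx => by simpa using (hneg x hx))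
      (by
        have : (fun x => -f' x / -g' x) = fun x => f' x / g' x := by
          funext x; rw [neg_div_neg_eq]
        rw [this]; exact hmono)
    simpa only [neg_sub_neg, show ∀ p q : ℝ, -p - -q = -(p - q) from fun p q => by ring,
      neg_div_neg_eq] using this
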